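/- For every p > 3 there exists a constant C_p > 0 such that for every integer N ≥ 1 and all complex numbers α_1, …, α_N: ‖ (Σ_{n≤N} |α_n e_n(x)|²)^{1/2} ‖_{L^p(B)} ≤ C_p (Σ_{n≤N} |α_n|² n^{2−6/p})^{1/2}. -/

import Mathlib

open MeasureTheory ProbabilityTheory Filter Real Set
open scoped Classical

noncomputable section

/-- The unit ball in `ℝ³`. -/
def ballB : Set (EuclideanSpace ℝ (Fin 3)) := Metric.ball 0 1

/-- The `n`-th radial Dirichlet eigenfunction of `-Δ` on the unit ball in `ℝ³`,
`e_n(x) = (2π)^{-1/2} sin(nπ|x|)/|x|`, extended by continuity at `x = 0`. -/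
def en (n : ℕ) (x : EuclideanSpace ℝ (Fin 3)) : ℝ :=
  if x = 0 then (2 * π) ^ (-(1:ℝ)/2) * (n * π)
  else (2 * π) ^ (-(1:ℝ)/2) * Real.sin (n * π * ‖x‖) / ‖x‖

/-- Japanese bracket `⟨x⟩ = (1 + |x|²)^{1/2}`. -/
def jap (x : ℝ) : ℝ := Real.sqrt (1 + x ^ 2)

/-- `L^p` norm over the unit ball of a complex-valued function. -/
def lpNormB (p : ℝ) (f : EuclideanSpace ℝ (Fin 3) → ℂ) : ℝ :=
  (∫ x in ballB, ‖f x‖ ^ p) ^ (1 / p)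

/-- Mixed norm `L^p_x(B; L^q_t([0,T]))`. -/
def lpLqNorm (p q T : ℝ) (F : ℝ → EuclideanSpace ℝ (Fin 3) → ℂ) : ℝ :=
  (∫ x in ballB, ((∫ t in Set.Icc (0:ℝ) T, ‖F t x‖ ^ q) ^ (1/q)) ^ p) ^ (1/p)

/-- `H^s` norm of a function `Σ c_n e_n`, in terms of its coefficients. -/
def hsNorm (s : ℝ) (c : ℕ → ℂ) : ℝ :=
  (∑' n : ℕ, (n:ℝ) ^ (2*s) * ‖c n‖ ^ 2) ^ ((1:ℝ)/2)

/-- `(g_n)` is a sequence of independent standard complex Gaussian random variables: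
independent, with i.i.d. real and imaginary parts distributed as `N(0, 1/2)`
(so that `E|g_n|² = 1`). -/
def IsStdGaussianSeq {Ω : Type*} [MeasurableSpace Ω] (P : Measure Ω) (g : ℕ → Ω → ℂ) : Prop :=
  iIndepFun g P ∧
  ∀ n : ℕ, Measurable (g n) ∧
    Measure.map (fun ω => (g n ω).re) P = gaussianReal 0 (1/2) ∧
    Measure.map (fun ω => (g n ω).im) P = gaussianReal 0 (1/2) ∧
    IndepFun (fun ω => (g n ω).re) (fun ω => (g n ω).im) P

/-- Real part of the truncated solution `u_N(t,x) = Σ_{n=1}^N c_n(t) e_n(x)`. -/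
def reU (N : ℕ) (c : ℕ → ℝ → ℂ) (t : ℝ) (x : EuclideanSpace ℝ (Fin 3)) : ℝ :=
  ∑ m ∈ Finset.Icc 1 N, (c m t).re * en m x

/-- `c` is the coefficient family of a global solution of the truncated nonlinear
wave system `i c_n' = nπ c_n − (nπ)^{-1} ∫_B |Re u_N|^α (Re u_N) e_n dx`,
with data `c_n(0) = g_n/(nπ)`. -/
def IsTruncSol (α : ℝ) (N : ℕ) (g : ℕ → ℂ) (c : ℕ → ℝ → ℂ) : Prop :=
  (∀ n : ℕ, n ∉ Finset.Icc 1 N → c n = 0) ∧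
  ∀ n ∈ Finset.Icc 1 N,
    c n 0 = g n / ((n * π : ℝ) : ℂ) ∧
    ∀ t : ℝ, HasDerivAt (c n)
      (-Complex.I * (((n * π : ℝ) : ℂ) * c n t -
        ((n * π : ℝ) : ℂ)⁻¹ *
          ((∫ x in ballB, |reU N c t x| ^ α * reU N c t x * en n x : ℝ) : ℂ))) t

/-- Coefficients of the free evolution `S(t)(P_N φ^{(ω)})` of the truncated random data. -/
def linCoef (g : ℕ → ℂ) (N n : ℕ) (t : ℝ) : ℂ :=
  if n ∈ Finset.Icc 1 N then
    g n / ((n * π : ℝ) : ℂ) * Complex.exp (-Complex.I * ((n * π * t : ℝ) : ℂ)) else 0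

end

section SquareFnAux
open scoped ENNReal

abbrev E3 := EuclideanSpace ℝ (Fin 3)

lemma measurable_en (n : ℕ) : Measurable (en n) := by
  unfold en
  refine Measurable.ite (MeasurableSet.singleton 0 |>.congr ?_) measurable_const ?_
  · ext x; simp
  · exact (measurable_const.mul
      ((Real.measurable_sin.comp (measurable_norm.const_mul _)))).div measurable_norm

lemma en_le (n : ℕ) {x : E3} (hx : x ≠ 0) :
    ‖en n x‖ ≤ min ((n:ℝ) * π) ‖x‖⁻¹ := by
  have hxn : 0 < ‖x‖ := norm_pos_iff.mpr hx
  have hc0 : (0:ℝ) < (2 * π) ^ (-(1:ℝ)/2) := Real.rpow_pos_of_pos (by positivity) _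
  have hc1 : (2 * π) ^ (-(1:ℝ)/2) ≤ 1 :=
    Real.rpow_le_one_of_one_le_of_nonpos (by nlinarith [Real.pi_gt_three]) (by norm_num)
  rw [en, if_neg hx]
  rw [Real.norm_eq_abs, abs_div, abs_of_pos hxn, abs_mul, abs_of_pos hc0]
  refine le_min ?_ ?_
  · rw [div_le_iff₀ hxn]
    calc (2*π) ^ (-(1:ℝ)/2) * |Real.sin (n * π * ‖x‖)| ≤ 1 * |n * π * ‖x‖| :=
          mul_le_mul hc1 Real.abs_sin_le_abs (abs_nonneg _) zero_le_one
      _ = (n:ℝ) * π * ‖x‖ := by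
          rw [one_mul, abs_of_nonneg (by positivity)]
  · rw [div_le_iff₀ hxn, inv_mul_cancel₀ hxn.ne']
    calc (2*π) ^ (-(1:ℝ)/2) * |Real.sin (n * π * ‖x‖)| ≤ 1 * 1 :=
          mul_le_mul hc1 (abs_sin_le_one _) (abs_nonneg _) zero_le_one
      _ = 1 := one_mul 1

-- rpow/pow algebra helper
lemma key_rpow {u : ℝ} (hu : 0 < u) (p : ℝ) : u ^ p * (u⁻¹) ^ (3:ℕ) = u ^ (p - 3) := by
  rw [inv_pow, ← Real.rpow_natCast u 3, ← Real.rpow_neg hu.le, ← Real.rpow_add hu]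
  norm_num
  ring_nf

lemma shell_id (p : ℝ) (n k : ℕ) (hn : 1 ≤ n) :
    ((n:ℝ) / 2 ^ k) ^ p * ((2:ℝ) ^ (k+1) / n) ^ (3:ℕ)
      = 8 * ((n:ℝ) ^ (p - 3) * ((2:ℝ) ^ (-(p-3))) ^ k) := by
  have hn0 : (0:ℝ) < n := by exact_mod_cast hn
  have hb : (0:ℝ) < 2 ^ k := by positivity
  have hu : (0:ℝ) < (n:ℝ) / 2 ^ k := by positivity
  have h2 : ((2:ℝ) ^ (k+1) / n) = 2 * ((n:ℝ) / 2 ^ k)⁻¹ := by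
    rw [inv_div]; field_simp; ring
  rw [h2, mul_pow]
  calc ((n:ℝ) / 2 ^ k) ^ p * ((2:ℝ) ^ (3:ℕ) * (((n:ℝ) / 2 ^ k)⁻¹) ^ (3:ℕ))
      = 8 * (((n:ℝ) / 2 ^ k) ^ p * (((n:ℝ) / 2 ^ k)⁻¹) ^ (3:ℕ)) := by norm_num; ring
    _ = 8 * ((n:ℝ) / 2 ^ k) ^ (p - 3) := by rw [key_rpow hu]
    _ = 8 * ((n:ℝ) ^ (p - 3) * ((2:ℝ) ^ (-(p-3))) ^ k) := by
        rw [Real.div_rpow hn0.le hb.le, ← Real.rpow_natCast ((2:ℝ) ^ (-(p-3))) k,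
          ← Real.rpow_natCast (2:ℝ) k, ← Real.rpow_mul (by norm_num : (0:ℝ) ≤ 2),
          ← Real.rpow_mul (by norm_num : (0:ℝ) ≤ 2), div_eq_mul_inv,
          ← Real.rpow_neg (by norm_num : (0:ℝ) ≤ 2)]
        congr 2
        ring

lemma fr3 : Module.finrank ℝ E3 = 3 := by
  simp [finrank_euclideanSpace_fin]

lemma en_bound_lint (p : ℝ) (hp : 3 < p) : ∃ K : ℝ≥0∞, K ≠ ⊤ ∧ ∀ n : ℕ, 1 ≤ n →
    ∫⁻ x in ballB, ENNReal.ofReal (‖en n x‖ ^ p) ≤ K * ENNReal.ofReal ((n:ℝ) ^ (p - 3)) := by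
  have hp0 : (0:ℝ) < p := by linarith
  set v : ℝ≥0∞ := volume (Metric.ball (0:E3) 1) with hv_def
  have hv : v ≠ ⊤ := measure_ball_lt_top.ne
  set r : ℝ≥0∞ := ENNReal.ofReal ((2:ℝ) ^ (-(p-3))) with hr_def
  have hr1 : r < 1 := by
    rw [hr_def, ← ENNReal.ofReal_one]
    exact (ENNReal.ofReal_lt_ofReal_iff_of_nonneg (by positivity)).mpr
      (Real.rpow_lt_one_of_one_lt_of_neg one_lt_two (by linarith))
  have hsub : (1 - r) ≠ 0 := (tsub_pos_of_lt hr1).ne'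
  refine ⟨(ENNReal.ofReal (π ^ p) + ENNReal.ofReal 8 * (1 - r)⁻¹) * v, ?_, ?_⟩
  · exact ENNReal.mul_ne_top (ENNReal.add_ne_top.mpr ⟨ENNReal.ofReal_ne_top,
      ENNReal.mul_ne_top ENNReal.ofReal_ne_top (ENNReal.inv_ne_top.mpr hsub)⟩) hv
  intro n hn
  have hn0 : (0:ℝ) < n := by exact_mod_cast hn
  set g : E3 → ℝ := fun x => min ((n:ℝ) * π) ‖x‖⁻¹ with hg_def
  have hgnn : ∀ x : E3, 0 ≤ g x := fun x => le_min (by positivity) (by positivity)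
  -- step a : bound by g
  have h_ae : ∀ᵐ x ∂(volume.restrict ballB),
      ENNReal.ofReal (‖en n x‖ ^ p) ≤ ENNReal.ofReal (g x ^ p) := by
    refine ae_restrict_of_ae ?_
    have h0 : ∀ᵐ x : E3 ∂volume, x ≠ 0 := by
      rw [ae_iff]
      refine measure_mono_null (fun x hx => ?_) (measure_singleton (0:E3))
      simpa using hx
    filter_upwards [h0] with x hx
    exact ENNReal.ofReal_le_ofReal
      (Real.rpow_le_rpow (norm_nonneg _) (en_le n hx) hp0.le)
  have step_a : ∫⁻ x in ballB, ENNReal.ofReal (‖en n x‖ ^ p)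
      ≤ ∫⁻ x in ballB, ENNReal.ofReal (g x ^ p) := lintegral_mono_ae h_ae
  -- step b : split
  set s1 : Set E3 := Metric.ball 0 (1 / n) with hs1_def
  set A : ℕ → Set E3 :=
    fun k => Metric.ball 0 ((2:ℝ) ^ (k+1) / n) \ Metric.ball 0 ((2:ℝ) ^ k / n) with hA_def
  have cover : ballB ⊆ s1 ∪ ⋃ k, A k := by
    intro x hx
    by_cases hxs : x ∈ s1
    · exact Or.inl hxs
    refine Or.inr ?_
    have hx1 : ‖x‖ < 1 := by simpa [ballB, mem_ball_zero_iff] using hx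
    have hx2 : 1 / (n:ℝ) ≤ ‖x‖ := by
      simpa [hs1_def, mem_ball_zero_iff, not_lt] using hxs
    set t : ℝ := (n:ℝ) * ‖x‖ with ht_def
    have ht1 : 1 ≤ t := by
      rw [ht_def]
      calc (1:ℝ) = n * (1 / n) := by field_simp
        _ ≤ n * ‖x‖ := by gcongr
    have htf : 1 ≤ ⌊t⌋₊ := Nat.le_floor (by exact_mod_cast ht1)
    set k : ℕ := Nat.log 2 ⌊t⌋₊ with hk_def
    have h2k : (2:ℝ) ^ k ≤ t := by
      calc ((2:ℝ) ^ k) = ((2 ^ k : ℕ) : ℝ) := by push_cast; ring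
        _ ≤ (⌊t⌋₊ : ℝ) := by exact_mod_cast Nat.pow_log_le_self 2 (by omega)
        _ ≤ t := Nat.floor_le (by linarith)
    have h2k' : t < (2:ℝ) ^ (k+1) := by
      have h1 : ⌊t⌋₊ + 1 ≤ 2 ^ (k+1) := Nat.succ_le_of_lt (Nat.lt_pow_succ_log_self (by norm_num) _)
      calc t < (⌊t⌋₊ : ℝ) + 1 := Nat.lt_floor_add_one t
        _ ≤ ((2:ℝ) ^ (k+1)) := by exact_mod_cast h1
    refine mem_iUnion.mpr ⟨k, ?_, ?_⟩
    · rw [mem_ball_zero_iff, lt_div_iff₀ hn0]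
      nlinarith [h2k', ht_def]
    · rw [mem_ball_zero_iff, not_lt, div_le_iff₀ hn0]
      nlinarith [h2k]
  have step_b : ∫⁻ x in ballB, ENNReal.ofReal (g x ^ p)
      ≤ (∫⁻ x in s1, ENNReal.ofReal (g x ^ p)) +
        ∑' k, ∫⁻ x in A k, ENNReal.ofReal (g x ^ p) := by
    calc ∫⁻ x in ballB, ENNReal.ofReal (g x ^ p)
        ≤ ∫⁻ x in s1 ∪ ⋃ k, A k, ENNReal.ofReal (g x ^ p) := lintegral_mono_set cover
      _ ≤ (∫⁻ x in s1, ENNReal.ofReal (g x ^ p)) +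
          ∫⁻ x in ⋃ k, A k, ENNReal.ofReal (g x ^ p) := lintegral_union_le _ _ _
      _ ≤ _ := add_le_add_right (lintegral_iUnion_le _ _) _
  -- piece 1
  have piece1 : ∫⁻ x in s1, ENNReal.ofReal (g x ^ p)
      ≤ ENNReal.ofReal (π ^ p) * ENNReal.ofReal ((n:ℝ) ^ (p-3)) * v := by
    have hb : ∀ x ∈ s1, ENNReal.ofReal (g x ^ p) ≤ ENNReal.ofReal (((n:ℝ) * π) ^ p) :=
      fun x _ => ENNReal.ofReal_le_ofReal (Real.rpow_le_rpow (hgnn x) (min_le_left _ _) hp0.le)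
    calc ∫⁻ x in s1, ENNReal.ofReal (g x ^ p)
        ≤ ∫⁻ _ in s1, ENNReal.ofReal (((n:ℝ) * π) ^ p) := setLIntegral_mono measurable_const hb
      _ = ENNReal.ofReal (((n:ℝ) * π) ^ p) * volume s1 := setLIntegral_const _ _
      _ = ENNReal.ofReal (((n:ℝ) * π) ^ p) * (ENNReal.ofReal ((1/(n:ℝ)) ^ (3:ℕ)) * v) := by
          rw [hs1_def, Measure.addHaar_ball _ _ (by positivity : (0:ℝ) ≤ 1/(n:ℝ)), fr3]
      _ = ENNReal.ofReal (((n:ℝ) * π) ^ p * (1/(n:ℝ)) ^ (3:ℕ)) * v := by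
          rw [← mul_assoc, ← ENNReal.ofReal_mul (by positivity)]
      _ = ENNReal.ofReal (π ^ p) * ENNReal.ofReal ((n:ℝ) ^ (p-3)) * v := by
          rw [← ENNReal.ofReal_mul (by positivity)]
          congr 1
          rw [Real.mul_rpow hn0.le Real.pi_pos.le, one_div, mul_comm ((n:ℝ) ^ p) (π ^ p),
            mul_assoc, key_rpow hn0 p]
  -- piece 2
  have piece2 : ∀ k : ℕ, ∫⁻ x in A k, ENNReal.ofReal (g x ^ p)
      ≤ ENNReal.ofReal (8 * (n:ℝ) ^ (p-3)) * r ^ k * v := by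
    intro k
    have hbpos : (0:ℝ) < (2:ℝ) ^ k / n := by positivity
    have hb : ∀ x ∈ A k, ENNReal.ofReal (g x ^ p) ≤ ENNReal.ofReal (((n:ℝ) / 2 ^ k) ^ p) := by
      intro x hx
      have hxge : (2:ℝ) ^ k / n ≤ ‖x‖ := by
        have := hx.2
        rw [mem_ball_zero_iff, not_lt] at this
        exact this
      have hgle : g x ≤ (n:ℝ) / 2 ^ k := by
        refine (min_le_right _ _).trans ?_
        have h1 : ‖x‖⁻¹ ≤ ((2:ℝ) ^ k / n)⁻¹ := inv_anti₀ hbpos hxge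
        rwa [inv_div] at h1
      exact ENNReal.ofReal_le_ofReal (Real.rpow_le_rpow (hgnn x) hgle hp0.le)
    calc ∫⁻ x in A k, ENNReal.ofReal (g x ^ p)
        ≤ ∫⁻ _ in A k, ENNReal.ofReal (((n:ℝ) / 2 ^ k) ^ p) := setLIntegral_mono measurable_const hb
      _ = ENNReal.ofReal (((n:ℝ) / 2 ^ k) ^ p) * volume (A k) := setLIntegral_const _ _
      _ ≤ ENNReal.ofReal (((n:ℝ) / 2 ^ k) ^ p) *
            (ENNReal.ofReal (((2:ℝ) ^ (k+1) / n) ^ (3:ℕ)) * v) := by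
          gcongr
          calc volume (A k) ≤ volume (Metric.ball (0:E3) ((2:ℝ) ^ (k+1) / n)) :=
                measure_mono diff_subset
            _ = ENNReal.ofReal (((2:ℝ) ^ (k+1) / n) ^ (3:ℕ)) * v := by
                rw [Measure.addHaar_ball _ _ (by positivity : (0:ℝ) ≤ (2:ℝ) ^ (k+1) / n), fr3]
      _ = ENNReal.ofReal (((n:ℝ) / 2 ^ k) ^ p * ((2:ℝ) ^ (k+1) / n) ^ (3:ℕ)) * v := by
          rw [← mul_assoc, ← ENNReal.ofReal_mul (by positivity)]
      _ = ENNReal.ofReal (8 * (n:ℝ) ^ (p-3)) * r ^ k * v := by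
          rw [shell_id p n k hn]
          congr 1
          rw [hr_def, ← ENNReal.ofReal_pow (by positivity),
            ← ENNReal.ofReal_mul (by positivity)]
          congr 1
          ring
  -- sum of piece 2
  have piece2sum : ∑' k, ∫⁻ x in A k, ENNReal.ofReal (g x ^ p)
      ≤ ENNReal.ofReal (8 * (n:ℝ) ^ (p-3)) * (1 - r)⁻¹ * v := by
    calc ∑' k, ∫⁻ x in A k, ENNReal.ofReal (g x ^ p)
        ≤ ∑' k, ENNReal.ofReal (8 * (n:ℝ) ^ (p-3)) * r ^ k * v :=
          ENNReal.tsum_le_tsum piece2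
      _ = ENNReal.ofReal (8 * (n:ℝ) ^ (p-3)) * (∑' k, r ^ k) * v := by
          rw [ENNReal.tsum_mul_right, ENNReal.tsum_mul_left]
      _ = ENNReal.ofReal (8 * (n:ℝ) ^ (p-3)) * (1 - r)⁻¹ * v := by
          rw [ENNReal.tsum_geometric]
  -- assemble
  calc ∫⁻ x in ballB, ENNReal.ofReal (‖en n x‖ ^ p)
      ≤ ∫⁻ x in ballB, ENNReal.ofReal (g x ^ p) := step_a
    _ ≤ (∫⁻ x in s1, ENNReal.ofReal (g x ^ p)) +
        ∑' k, ∫⁻ x in A k, ENNReal.ofReal (g x ^ p) := step_b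
    _ ≤ ENNReal.ofReal (π ^ p) * ENNReal.ofReal ((n:ℝ) ^ (p-3)) * v +
        ENNReal.ofReal (8 * (n:ℝ) ^ (p-3)) * (1 - r)⁻¹ * v := add_le_add piece1 piece2sum
    _ = (ENNReal.ofReal (π ^ p) + ENNReal.ofReal 8 * (1 - r)⁻¹) * v *
        ENNReal.ofReal ((n:ℝ) ^ (p-3)) := by
        rw [ENNReal.ofReal_mul (by norm_num : (0:ℝ) ≤ 8)]
        ring

lemma minkowski_sum {α : Type*} [MeasurableSpace α] (μ : Measure α) {ι : Type*}
    (s : Finset ι) (f : ι → α → ℝ≥0∞) (hf : ∀ i, Measurable (f i)) {q : ℝ} (hq : 1 ≤ q) :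
    (∫⁻ x, (∑ i ∈ s, f i x) ^ q ∂μ) ^ (1/q) ≤ ∑ i ∈ s, (∫⁻ x, f i x ^ q ∂μ) ^ (1/q) := by
  classical
  induction s using Finset.induction with
  | empty =>
      simp only [Finset.sum_empty]
      rw [ENNReal.zero_rpow_of_pos (by linarith), lintegral_zero,
        ENNReal.zero_rpow_of_pos (by positivity)]
  | @insert a s ha ih =>
      simp only [Finset.sum_insert ha]
      calc (∫⁻ x, (f a x + ∑ i ∈ s, f i x) ^ q ∂μ) ^ (1/q)
          ≤ (∫⁻ x, f a x ^ q ∂μ) ^ (1/q) + (∫⁻ x, (∑ i ∈ s, f i x) ^ q ∂μ) ^ (1/q) :=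
            ENNReal.lintegral_Lp_add_le (hf a).aemeasurable
              (Finset.measurable_sum s fun i _ => hf i).aemeasurable hq
        _ ≤ _ := add_le_add_right ih _


end SquareFnAux

open scoped ENNReal

/-- square function estimate, (2.2). For `p > 3`,
`‖(Σ_{n≤N} |α_n e_n(x)|²)^{1/2}‖_{L^p(B)} ≤ C_p (Σ_{n≤N} |α_n|² n^{2-6/p})^{1/2}`. -/
theorem square_function_estimate (p : ℝ) (hp : 3 < p) :
    ∃ C : ℝ, 0 < C ∧ ∀ N : ℕ, 1 ≤ N → ∀ a : ℕ → ℂ,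
      (∫ x in ballB,
          ((∑ n ∈ Finset.Icc 1 N, ‖a n * (en n x : ℂ)‖ ^ 2) ^ ((1:ℝ)/2)) ^ p) ^ (1/p)
        ≤ C * (∑ n ∈ Finset.Icc 1 N, ‖a n‖ ^ 2 * (n : ℝ) ^ (2 - 6/p)) ^ ((1:ℝ)/2) := by
  have hp0 : (0:ℝ) < p := by linarith
  obtain ⟨K, hK, hKb⟩ := en_bound_lint p hp
  have hKp : K ^ ((1:ℝ)/p) ≠ ⊤ := ENNReal.rpow_ne_top_of_nonneg (by positivity) hK
  refine ⟨(K ^ ((1:ℝ)/p)).toReal + 1,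
    add_pos_of_nonneg_of_pos ENNReal.toReal_nonneg one_pos, ?_⟩
  intro N hN a
  set q : ℝ := p / 2 with hq_def
  have hq1 : 1 ≤ q := by rw [hq_def]; linarith
  have hq0 : 0 < q := by linarith
  set F : ℕ → E3 → ℝ≥0∞ := fun n x => ENNReal.ofReal (‖a n * (en n x : ℂ)‖ ^ 2) with hF_def
  have hFm : ∀ n, Measurable (F n) := fun n =>
    ((measurable_const.mul (Complex.measurable_ofReal.comp (measurable_en n))).norm.pow
      measurable_const).ennreal_ofReal
  set T : ℝ≥0∞ := ∫⁻ x in ballB, (∑ n ∈ Finset.Icc 1 N, F n x) ^ q with hT_def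
  -- Step 1 : rewrite LHS integral as a lintegral
  have hsum_nn : ∀ x : E3, 0 ≤ ∑ n ∈ Finset.Icc 1 N, ‖a n * (en n x : ℂ)‖ ^ 2 :=
    fun x => Finset.sum_nonneg fun n _ => by positivity
  have hintrw : (∫ x in ballB,
      ((∑ n ∈ Finset.Icc 1 N, ‖a n * (en n x : ℂ)‖ ^ 2) ^ ((1:ℝ)/2)) ^ p) = T.toReal := by
    have h1 : ∀ x : E3, ((∑ n ∈ Finset.Icc 1 N, ‖a n * (en n x : ℂ)‖ ^ 2) ^ ((1:ℝ)/2)) ^ p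
        = (∑ n ∈ Finset.Icc 1 N, ‖a n * (en n x : ℂ)‖ ^ 2) ^ q := by
      intro x
      rw [← Real.rpow_mul (hsum_nn x)]
      congr 1
      rw [hq_def]; ring
    rw [MeasureTheory.integral_congr_ae (Filter.Eventually.of_forall fun x => h1 x)]
    rw [MeasureTheory.integral_eq_lintegral_of_nonneg_ae
      (Filter.Eventually.of_forall fun x => Real.rpow_nonneg (hsum_nn x) q) ?_]
    · congr 1
      refine lintegral_congr fun x => ?_
      rw [← ENNReal.ofReal_rpow_of_nonneg (hsum_nn x) hq0.le]
      congr 1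
      rw [ENNReal.ofReal_sum_of_nonneg fun n _ => by positivity]
    · exact ((Real.continuous_rpow_const hq0.le).measurable.comp
        (Finset.measurable_sum _ fun n _ =>
          ((measurable_const.mul (Complex.measurable_ofReal.comp (measurable_en n))).norm.pow
            measurable_const))).aestronglyMeasurable
  -- Step 2 : Minkowski
  have mink : T ^ (1/q) ≤ ∑ n ∈ Finset.Icc 1 N, (∫⁻ x in ballB, F n x ^ q) ^ (1/q) :=
    minkowski_sum (volume.restrict ballB) _ F hFm hq1
  -- Step 3 : per-term bound
  have per : ∀ n ∈ Finset.Icc 1 N, (∫⁻ x in ballB, F n x ^ q) ^ (1/q)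
      ≤ K ^ ((2:ℝ)/p) * ENNReal.ofReal (‖a n‖ ^ 2 * (n:ℝ) ^ (2 - 6/p)) := by
    intro n hn
    have hn1 : 1 ≤ n := (Finset.mem_Icc.mp hn).1
    have hFq : ∀ x : E3, F n x ^ q
        = ENNReal.ofReal (‖a n‖ ^ p) * ENNReal.ofReal (‖en n x‖ ^ p) := by
      intro x
      simp only [hF_def]
      have hnorm : ‖a n * (en n x : ℂ)‖ = ‖a n‖ * ‖en n x‖ := by
        rw [norm_mul, Complex.norm_real]
      rw [hnorm, mul_pow, ENNReal.ofReal_rpow_of_nonneg (by positivity) hq0.le]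
      rw [Real.mul_rpow (by positivity) (by positivity)]
      rw [← Real.rpow_natCast ‖a n‖ 2, ← Real.rpow_natCast ‖en n x‖ 2,
        ← Real.rpow_mul (norm_nonneg _), ← Real.rpow_mul (norm_nonneg _)]
      have : (2:ℝ) * q = p := by rw [hq_def]; ring
      rw [ENNReal.ofReal_mul (by positivity)]
      norm_num [this]
    have hint : ∫⁻ x in ballB, F n x ^ q
        = ENNReal.ofReal (‖a n‖ ^ p) * ∫⁻ x in ballB, ENNReal.ofReal (‖en n x‖ ^ p) := by
      rw [← lintegral_const_mul _ ((measurable_en n).norm.pow measurable_const).ennreal_ofReal]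
      exact lintegral_congr fun x => hFq x
    rw [hint]
    calc (ENNReal.ofReal (‖a n‖ ^ p) * ∫⁻ x in ballB, ENNReal.ofReal (‖en n x‖ ^ p)) ^ (1/q)
        ≤ (ENNReal.ofReal (‖a n‖ ^ p) * (K * ENNReal.ofReal ((n:ℝ) ^ (p - 3)))) ^ (1/q) := by
          gcongr
          exact hKb n hn1
      _ = ENNReal.ofReal (‖a n‖ ^ p) ^ (1/q) * K ^ (1/q) *
            ENNReal.ofReal ((n:ℝ) ^ (p - 3)) ^ (1/q) := by
          rw [ENNReal.mul_rpow_of_nonneg _ _ (by positivity),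
            ENNReal.mul_rpow_of_nonneg _ _ (by positivity)]
          ring
      _ = K ^ ((2:ℝ)/p) * ENNReal.ofReal (‖a n‖ ^ 2 * (n:ℝ) ^ (2 - 6/p)) := by
          have h1q : 1/q = 2/p := by rw [hq_def]; field_simp
          have hnn : (0:ℝ) < n := by exact_mod_cast hn1
          rw [h1q, ENNReal.ofReal_rpow_of_nonneg (by positivity) (by positivity),
            ENNReal.ofReal_rpow_of_nonneg (by positivity) (by positivity)]
          rw [← Real.rpow_natCast ‖a n‖ 2]
          rw [← Real.rpow_mul (norm_nonneg _), ← Real.rpow_mul hnn.le]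
          rw [ENNReal.ofReal_mul (by positivity)]
          have e1 : p * (2/p) = ((2:ℕ):ℝ) := by field_simp; norm_num
          have e2 : (p - 3) * (2/p) = 2 - 6/p := by field_simp; ring
          rw [e1, e2, Real.rpow_natCast]
          ring
  -- Step 4 : conclude
  set R2 : ℝ := ∑ n ∈ Finset.Icc 1 N, ‖a n‖ ^ 2 * (n:ℝ) ^ (2 - 6/p) with hR2_def
  have hR2nn : 0 ≤ R2 := Finset.sum_nonneg fun n hn => by
    have : (0:ℝ) ≤ (n:ℝ) ^ (2 - 6/p) := Real.rpow_nonneg (Nat.cast_nonneg n) _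
    positivity
  have hTq : T ^ (1/q) ≤ K ^ ((2:ℝ)/p) * ENNReal.ofReal R2 := by
    refine mink.trans ?_
    calc ∑ n ∈ Finset.Icc 1 N, (∫⁻ x in ballB, F n x ^ q) ^ (1/q)
        ≤ ∑ n ∈ Finset.Icc 1 N,
            K ^ ((2:ℝ)/p) * ENNReal.ofReal (‖a n‖ ^ 2 * (n:ℝ) ^ (2 - 6/p)) :=
          Finset.sum_le_sum per
      _ = K ^ ((2:ℝ)/p) * ENNReal.ofReal R2 := by
          rw [← Finset.mul_sum, hR2_def,
            ENNReal.ofReal_sum_of_nonneg fun n _ => by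
              have : (0:ℝ) ≤ (n:ℝ) ^ (2 - 6/p) := Real.rpow_nonneg (Nat.cast_nonneg n) _
              positivity]
  have hTp : T ^ ((1:ℝ)/p) ≤ K ^ ((1:ℝ)/p) * ENNReal.ofReal (R2 ^ ((1:ℝ)/2)) := by
    have h1 : T ^ ((1:ℝ)/p) = (T ^ (1/q)) ^ ((1:ℝ)/2) := by
      rw [← ENNReal.rpow_mul]
      congr 1
      rw [hq_def]; field_simp
    rw [h1]
    calc (T ^ (1/q)) ^ ((1:ℝ)/2) ≤ (K ^ ((2:ℝ)/p) * ENNReal.ofReal R2) ^ ((1:ℝ)/2) :=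
          ENNReal.rpow_le_rpow hTq (by norm_num)
      _ = K ^ ((1:ℝ)/p) * ENNReal.ofReal (R2 ^ ((1:ℝ)/2)) := by
          rw [ENNReal.mul_rpow_of_nonneg _ _ (by norm_num), ← ENNReal.rpow_mul,
            ENNReal.ofReal_rpow_of_nonneg hR2nn (by norm_num)]
          norm_num
  rw [hintrw]
  have hfin : K ^ ((1:ℝ)/p) * ENNReal.ofReal (R2 ^ ((1:ℝ)/2)) ≠ ⊤ :=
    ENNReal.mul_ne_top hKp ENNReal.ofReal_ne_top
  calc T.toReal ^ (1/p) = (T ^ ((1:ℝ)/p)).toReal := ENNReal.toReal_rpow T (1/p)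
    _ ≤ (K ^ ((1:ℝ)/p) * ENNReal.ofReal (R2 ^ ((1:ℝ)/2))).toReal :=
        ENNReal.toReal_mono hfin hTp
    _ = (K ^ ((1:ℝ)/p)).toReal * R2 ^ ((1:ℝ)/2) := by
        rw [ENNReal.toReal_mul, ENNReal.toReal_ofReal (Real.rpow_nonneg hR2nn _)]
    _ ≤ ((K ^ ((1:ℝ)/p)).toReal + 1) * R2 ^ ((1:ℝ)/2) := by
        have : (0:ℝ) ≤ R2 ^ ((1:ℝ)/2) := Real.rpow_nonneg hR2nn _
        nlinarith
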